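/- Let k₀ ∈ ℝ, k₀ ≠ 0, and let κ ∈ ℂ satisfy i κ tan κ = k₀ (with cos κ ≠ 0). Set C = e^{2iκ}(κ - k₀)/(κ + k₀) and z(x) = e^{iκx} + C e^{-iκx}. Then z satisfies -z'' + U z = k₀² z on (-1,1) with the constant potential U = k₀² - κ², and z obeys the outgoing boundary conditions z'(1) = i k₀ z(1) and z'(-1) = -i k₀ z(-1). In particular the rectangular potential equal to k₀² - κ² on [-1,1] and 0 outside has a spectral singularity at k₀. -/

import Mathlib

lemma expDeriv (a : ℂ) (x : ℝ) :
    HasDerivAt (fun t : ℝ => Complex.exp (a * t)) (a * Complex.exp (a * x)) x := by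
  have h := (Complex.hasDerivAt_exp (a * (x : ℂ))).comp (x : ℂ)
    ((hasDerivAt_id (x : ℂ)).const_mul a)
  have h2 : HasDerivAt (fun y : ℂ => Complex.exp (a * y)) (a * Complex.exp (a * x)) (x : ℂ) := by
    simpa [mul_comm, Function.comp_def] using h
  exact h2.comp_ofReal

/-- Rectangular potentials with a prescribed spectral singularity at k₀. -/
theorem stmt_3 (k₀ : ℝ) (hk : k₀ ≠ 0) (κ : ℂ)
    (hcos : Complex.cos κ ≠ 0)
    (htan : Complex.I * κ * Complex.tan κ = (k₀ : ℂ))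
    (hκk : κ + (k₀ : ℂ) ≠ 0)
    (C : ℂ) (hC : C = Complex.exp (2 * Complex.I * κ) * (κ - k₀) / (κ + k₀))
    (z : ℝ → ℂ)
    (hzdef : ∀ x : ℝ, z x = Complex.exp (Complex.I * κ * x) + C * Complex.exp (-(Complex.I * κ * x))) :
    (∀ x ∈ Set.Ioo (-1 : ℝ) 1,
      -(deriv (deriv z) x) + ((k₀ : ℂ) ^ 2 - κ ^ 2) * z x = (k₀ : ℂ) ^ 2 * z x) ∧
    deriv z 1 = Complex.I * k₀ * z 1 ∧
    deriv z (-1) = -(Complex.I * k₀) * z (-1) := by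
  set a : ℂ := Complex.I * κ with ha
  have hz : z = fun x : ℝ => Complex.exp (a * x) + C * Complex.exp ((-a) * x) := by
    funext x
    rw [hzdef x]
    ring_nf
  have hz' : ∀ x : ℝ, HasDerivAt z
      (a * Complex.exp (a * x) + C * ((-a) * Complex.exp ((-a) * x))) x := by
    intro x
    rw [hz]
    exact (expDeriv a x).add ((expDeriv (-a) x).const_mul C)
  have hdz : deriv z = fun x : ℝ =>
      a * Complex.exp (a * x) + C * ((-a) * Complex.exp ((-a) * x)) :=
    funext fun x => (hz' x).deriv
  have hz'' : ∀ x : ℝ, deriv (deriv z) x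
      = a * (a * Complex.exp (a * x)) + C * ((-a) * ((-a) * Complex.exp ((-a) * x))) := by
    intro x
    rw [hdz]
    exact (((expDeriv a x).const_mul a).add (((expDeriv (-a) x).const_mul (-a)).const_mul C)).deriv
  -- trig facts
  have hsc : Complex.I * κ * Complex.sin κ = (k₀ : ℂ) * Complex.cos κ := by
    rw [Complex.tan_eq_sin_div_cos] at htan
    field_simp at htan
    linear_combination htan
  have hexp : Complex.exp (Complex.I * κ) = Complex.cos κ + Complex.sin κ * Complex.I := by
    rw [mul_comm]; exact Complex.exp_mul_I κ
  have hexp' : Complex.exp (-(Complex.I * κ)) = Complex.cos κ - Complex.sin κ * Complex.I := by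
    rw [show -(Complex.I * κ) = (-κ) * Complex.I by ring, Complex.exp_mul_I,
      Complex.cos_neg, Complex.sin_neg]
    ring
  have hE : Complex.exp (Complex.I * κ) ≠ 0 := Complex.exp_ne_zero _
  have hE2 : Complex.exp (2 * Complex.I * κ) = Complex.exp (Complex.I * κ) ^ 2 := by
    rw [← Complex.exp_nat_mul]; ring_nf
  have hEinv : Complex.exp (-(Complex.I * κ)) = (Complex.exp (Complex.I * κ))⁻¹ := by
    rw [← Complex.exp_neg]
  have hplus : (κ + k₀) * Complex.cos κ = κ * Complex.exp (Complex.I * κ) := by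
    linear_combination (-1 : ℂ) * hsc - κ * hexp
  have hminus : (κ - k₀) * Complex.cos κ = κ * (Complex.exp (Complex.I * κ))⁻¹ := by
    rw [← Complex.exp_neg, hexp']
    linear_combination hsc
  refine ⟨?_, ?_, ?_⟩
  · intro x hx
    rw [hz'' x, hz]
    simp only [ha]
    linear_combination (-(κ^2) * (Complex.exp (Complex.I*κ*(x:ℂ)) + C * Complex.exp (-(Complex.I*κ)*(x:ℂ)))) * Complex.I_sq
  · rw [hdz, hz]
    simp only [ha, Complex.ofReal_one, mul_one, neg_mul, Complex.exp_neg]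
    rw [hC, hE2]
    field_simp
    ring
  · rw [hdz, hz]
    simp only [ha, Complex.ofReal_neg, Complex.ofReal_one, mul_neg, mul_one, neg_neg,
      neg_mul, Complex.exp_neg]
    rw [hC, hE2]
    have h1 : (κ + k₀) ^ 2 * Complex.cos κ ^ 2 = κ ^ 2 * Complex.exp (Complex.I * κ) ^ 2 := by
      rw [← mul_pow, hplus, mul_pow]
    have h2 : (κ - k₀) ^ 2 * Complex.cos κ ^ 2 * Complex.exp (Complex.I * κ) ^ 2 = κ ^ 2 := by
      have := congrArg (· ^ 2) hminus
      simp only [mul_pow] at this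
      rw [this]
      field_simp
    have hkey : (κ + k₀) ^ 2 = Complex.exp (Complex.I * κ) ^ 4 * (κ - k₀) ^ 2 := by
      apply mul_right_cancel₀ (pow_ne_zero 2 hcos)
      linear_combination h1 - Complex.exp (Complex.I * κ) ^ 2 * h2
    field_simp
    linear_combination hkey
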